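/- Let {Q_θ : θ ∈ Θ} be a family of probability measures on Â and let (Xₙ; n≥1) be a stationary and ergodic source with X₁ ∼ P. Fix D ≥ 0 and suppose there exist Δ > 0 and a measurable K ⊆ A with P(K) > D/(D+Δ). For ε > 0 set T_ε := {θ ∈ Θ : Q_θ(B(K, D+Δ)) ≥ ε}. Then for each ε ∈ (0,1), with probability 1, liminf_{n→∞} inf_{θ ∈ T_ε^c} R₁(P_{X₁ⁿ}, Q_θ, D) ≥ (D/(D+Δ)) log ε − P(K) log(2ε), and consequently, with probability 1, lim_{ε↓0} liminf_{n→∞} inf_{θ ∈ T_ε^c} R₁(P_{X₁ⁿ}, Q_θ, D) = ∞ (with the convention inf ∅ := +∞). -/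

import Mathlib

open MeasureTheory ProbabilityTheory Filter Topology Set
open scoped ENNReal NNReal

noncomputable section

open scoped Classical in
/-- Relative entropy `H(μ‖ν)`, with values in `ℝ≥0∞` and the convention that it is `∞`
unless `μ ≪ ν` and the log-likelihood ratio is integrable. -/
def relEnt {X : Type*} [MeasurableSpace X] (μ ν : Measure X) : ℝ≥0∞ :=
  if μ ≪ ν ∧ Integrable (llr μ ν) μ then ENNReal.ofReal (∫ x, llr μ ν x ∂μ) else ⊤

/-- The set `W(P,D)` of couplings with first marginal `P` and expected distortion at most `D`. -/
def Wset {A B : Type*} [MeasurableSpace A] [MeasurableSpace B]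
    (ρ : A → B → ℝ) (P : Measure A) (D : ℝ) : Set (Measure (A × B)) :=
  {W | IsProbabilityMeasure W ∧ W.fst = P ∧
    ∫⁻ p, ENNReal.ofReal (ρ p.1 p.2) ∂W ≤ ENNReal.ofReal D}

/-- `R₁(P,Q,D) := inf_{W ∈ W(P,D)} H(W ‖ P × Q)`, with `inf ∅ = ∞`. -/
def RQ {A B : Type*} [MeasurableSpace A] [MeasurableSpace B]
    (ρ : A → B → ℝ) (P : Measure A) (Q : Measure B) (D : ℝ) : ℝ≥0∞ :=
  ⨅ W ∈ Wset ρ P D, relEnt W (P.prod Q)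

/-- `R₁^Θ(P,D) := inf_θ R₁(P,Q_θ,D)`. -/
def RTh {A B Θ : Type*} [MeasurableSpace A] [MeasurableSpace B]
    (ρ : A → B → ℝ) (Q : Θ → Measure B) (P : Measure A) (D : ℝ) : ℝ≥0∞ :=
  ⨅ θ : Θ, RQ ρ P (Q θ) D

/-- The (first-order) rate-distortion function
`R₁(P,D) := inf_{W ∈ W(P,D)} H(W ‖ W^A × W^Â)`, with `inf ∅ = ∞`. -/
def Rnp {A B : Type*} [MeasurableSpace A] [MeasurableSpace B]
    (ρ : A → B → ℝ) (P : Measure A) (D : ℝ) : ℝ≥0∞ :=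
  ⨅ W ∈ Wset ρ P D, relEnt W (W.fst.prod W.snd)

/-- The empirical distribution of `(x 0, …, x (n-1))`. -/
def empMeas {A : Type*} [MeasurableSpace A] (x : ℕ → A) (n : ℕ) : Measure A :=
  (n : ℝ≥0∞)⁻¹ • ∑ k ∈ Finset.range n, Measure.dirac (x k)

/-- The shift map on sequences. -/
def shift {A : Type*} : (ℕ → A) → (ℕ → A) := fun x n => x (n + 1)

/-- `D_c^Θ(P)`: the set of distortion levels where `D ↦ R₁^Θ(P,D)` is continuous from the
left (the left limit being the infimum over `λ ∈ (0,1)` of `R₁^Θ(P,λD)`, by monotonicity),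
with the conventions that `0 ∈ D_c^Θ(P)` and that `D ∈ D_c^Θ(P)` whenever `R₁^Θ(P,D) = ∞`. -/
def DcTh {A B Θ : Type*} [MeasurableSpace A] [MeasurableSpace B]
    (ρ : A → B → ℝ) (Q : Θ → Measure B) (P : Measure A) : Set ℝ :=
  {D | 0 ≤ D ∧ (D = 0 ∨ RTh ρ Q P D = ⊤ ∨
    RTh ρ Q P D = ⨅ l ∈ Set.Ioo (0:ℝ) 1, RTh ρ Q P (l * D))}

/-- `D_c(P)` for the rate-distortion function. -/
def DcNp {A B : Type*} [MeasurableSpace A] [MeasurableSpace B]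
    (ρ : A → B → ℝ) (P : Measure A) : Set ℝ :=
  {D | 0 ≤ D ∧ (D = 0 ∨ Rnp ρ P D = ⊤ ∨
    Rnp ρ P D = ⨅ l ∈ Set.Ioo (0:ℝ) 1, Rnp ρ P (l * D))}

/-- `D_c(P,Q)` for `R₁(P,Q,·)`. -/
def DcQ {A B : Type*} [MeasurableSpace A] [MeasurableSpace B]
    (ρ : A → B → ℝ) (P : Measure A) (Q : Measure B) : Set ℝ :=
  {D | 0 ≤ D ∧ (D = 0 ∨ RQ ρ P Q D = ⊤ ∨
    RQ ρ P Q D = ⨅ l ∈ Set.Ioo (0:ℝ) 1, RQ ρ P Q (l * D))}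

/-- The union of distortion balls of radius `M` centered at points of `K`. -/
def Bset {A B : Type*} (ρ : A → B → ℝ) (K : Set A) (M : ℝ) : Set B :=
  {y | ∃ x ∈ K, ρ x y ≤ M}


section AuxiliaryLemmas

private lemma aux_liminf_le (a b : ℕ → ℝ) (ha0 : ∀ n, 0 ≤ a n) (ha1 : ∀ n, a n ≤ 1)
    (hb0 : ∀ n, 0 ≤ b n) (hb1 : ∀ n, b n ≤ 1)
    (hd : ∀ n, 1 ≤ n → a n ≤ b n + (n : ℝ)⁻¹) :
    liminf a atTop ≤ liminf b atTop := by
  refine le_of_forall_pos_le_add fun ε hε => ?_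
  have hinv : Tendsto (fun n : ℕ => (n : ℝ)⁻¹) atTop (nhds 0) :=
    tendsto_inv_atTop_zero.comp tendsto_natCast_atTop_atTop
  have hev : ∀ᶠ n in atTop, a n ≤ b n + ε := by
    filter_upwards [hinv.eventually_lt_const hε, eventually_ge_atTop 1] with n h1 h2
    exact (hd n h2).trans (by linarith)
  calc liminf a atTop ≤ liminf (fun n => b n + ε) atTop :=
        liminf_le_liminf hev (isBoundedUnder_of ⟨0, fun n => ha0 n⟩)
          (isCoboundedUnder_ge_of_le atTop (x := 1 + ε) fun n => by have := hb1 n; linarith)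
    _ = liminf b atTop + ε :=
        liminf_add_const atTop b ε (isCoboundedUnder_ge_of_le atTop fun n => hb1 n)
          (isBoundedUnder_of ⟨0, fun n => hb0 n⟩)

private lemma aux_liminf_eq (a b : ℕ → ℝ) (ha0 : ∀ n, 0 ≤ a n) (ha1 : ∀ n, a n ≤ 1)
    (hb0 : ∀ n, 0 ≤ b n) (hb1 : ∀ n, b n ≤ 1)
    (hd : ∀ n, 1 ≤ n → |a n - b n| ≤ (n : ℝ)⁻¹) :
    liminf a atTop = liminf b atTop := by
  refine le_antisymm (aux_liminf_le a b ha0 ha1 hb0 hb1 fun n hn => ?_)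
    (aux_liminf_le b a hb0 hb1 ha0 ha1 fun n hn => ?_)
  · have := abs_le.1 (hd n hn); linarith [this.1, this.2]
  · have := abs_le.1 (hd n hn); linarith [this.1, this.2]

/-- The "liminf half" of the pointwise ergodic theorem, for `[0,1]`-valued functions,
proved following Katznelson–Weiss. -/
theorem ergodic_liminf_avg {Ω : Type*} [MeasurableSpace Ω] {μ : Measure Ω}
    [IsProbabilityMeasure μ] {T : Ω → Ω} (herg : Ergodic T μ) {f : Ω → ℝ}
    (hf : Measurable f) (hf0 : ∀ x, 0 ≤ f x) (hf1 : ∀ x, f x ≤ 1) :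
    ∀ᵐ x ∂μ, (∫ y, f y ∂μ) ≤
      liminf (fun n : ℕ => (n : ℝ)⁻¹ * ∑ k ∈ Finset.range n, f (T^[k] x)) atTop := by
  have hT : MeasurePreserving T μ μ := herg.toMeasurePreserving
  set S : ℕ → Ω → ℝ := fun n x => ∑ k ∈ Finset.range n, f (T^[k] x) with hS
  set A : ℕ → Ω → ℝ := fun n x => (n : ℝ)⁻¹ * S n x with hA
  have hAmeas : ∀ n, Measurable (A n) := by
    intro n
    exact measurable_const.mul (Finset.measurable_sum _ fun k _ => hf.comp (hT.measurable.iterate k))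
  have hS0 : ∀ (n : ℕ) (x : Ω), 0 ≤ S n x := fun n x => Finset.sum_nonneg fun k _ => hf0 _
  have hSle : ∀ (n : ℕ) (x : Ω), S n x ≤ (n : ℝ) := by
    intro n x
    calc S n x ≤ ∑ k ∈ Finset.range n, (1:ℝ) := Finset.sum_le_sum fun k _ => hf1 _
      _ = (n : ℝ) := by simp
  have hA0 : ∀ (n : ℕ) (x : Ω), 0 ≤ A n x := fun n x => mul_nonneg (by positivity) (hS0 n x)
  have hA1 : ∀ (n : ℕ) (x : Ω), A n x ≤ 1 := by
    intro n x
    rcases Nat.eq_zero_or_pos n with rfl | h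
    · simp [hA]
    · have hn : (0:ℝ) < n := by exact_mod_cast h
      calc A n x = (n:ℝ)⁻¹ * S n x := rfl
        _ ≤ (n:ℝ)⁻¹ * n := mul_le_mul_of_nonneg_left (hSle n x) (by positivity)
        _ = 1 := inv_mul_cancel₀ hn.ne'
  set h : Ω → ℝ := fun x => liminf (fun n => A n x) atTop with hh
  have hmeas_h : Measurable h := Measurable.liminf fun n => hAmeas n
  have h0 : ∀ x, 0 ≤ h x := by
    intro x
    exact le_liminf_of_le (isCoboundedUnder_ge_of_le atTop fun n => hA1 n x)
      (Eventually.of_forall fun n => hA0 n x)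
  have h1 : ∀ x, h x ≤ 1 := by
    intro x
    exact liminf_le_of_frequently_le (Frequently.of_forall fun n => hA1 n x)
      (isBoundedUnder_of ⟨0, fun n => hA0 n x⟩)
  -- invariance of h
  have hinv : ∀ x, h (T x) = h x := by
    intro x
    refine aux_liminf_eq _ _ (fun n => hA0 n (T x)) (fun n => hA1 n (T x))
      (fun n => hA0 n x) (fun n => hA1 n x) ?_
    intro n hn
    have hsum : S n (T x) = S (n+1) x - f x := by
      simp only [hS]
      have hiter : ∀ k : ℕ, f (T^[k] (T x)) = f (T^[k+1] x) := fun k => by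
        rw [Function.iterate_succ_apply]
      simp_rw [hiter]
      have h' := Finset.sum_range_succ' (fun k => f (T^[k] x)) n
      simp only [Function.iterate_zero_apply] at h' ⊢
      linarith [h']
    have hsn : S (n+1) x = S n x + f (T^[n] x) := Finset.sum_range_succ _ n
    have hdiff : A n (T x) - A n x = (n:ℝ)⁻¹ * (f (T^[n] x) - f x) := by
      simp only [hA, hsum, hsn]; ring
    rw [hdiff, abs_mul]
    have h1' : |f (T^[n] x) - f x| ≤ 1 := by
      rw [abs_le]
      constructor
      · linarith [hf0 (T^[n] x), hf1 x]
      · linarith [hf1 (T^[n] x), hf0 x]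
    have hn0 : (0:ℝ) ≤ (n:ℝ)⁻¹ := by positivity
    calc |(n:ℝ)⁻¹| * |f (T^[n] x) - f x| = (n:ℝ)⁻¹ * |f (T^[n] x) - f x| := by
          rw [abs_of_nonneg hn0]
      _ ≤ (n:ℝ)⁻¹ * 1 := mul_le_mul_of_nonneg_left h1' hn0
      _ = (n:ℝ)⁻¹ := mul_one _
  -- the invariant level sets and the a.e. constant γ
  set Lset : Set ℝ := {t | μ {x | h x < t} = 0} with hLset
  have hL0 : (0:ℝ) ∈ Lset := by
    have hemp : {x | h x < 0} = ∅ := by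
      ext x; simp only [mem_setOf_eq, mem_empty_iff_false, iff_false, not_lt]; exact h0 x
    simp only [hLset, mem_setOf_eq, hemp, measure_empty]
  have hLbdd : BddAbove Lset := by
    refine ⟨2, fun t ht => ?_⟩
    by_contra hcon
    push_neg at hcon
    have huniv : {x | h x < t} = univ := by
      ext x; simp only [mem_setOf_eq, mem_univ, iff_true]
      linarith [h1 x]
    simp only [hLset, mem_setOf_eq, huniv, measure_univ] at ht
    exact one_ne_zero ht
  set γ : ℝ := sSup Lset with hγ
  have hγ0 : 0 ≤ γ := le_csSup hLbdd hL0
  -- a.e. γ ≤ h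
  have hae_ge : ∀ᵐ x ∂μ, γ ≤ h x := by
    have hnull : μ {x | h x < γ} = 0 := by
      have hsub : {x | h x < γ} ⊆ ⋃ q : ℚ, {x | h x < q ∧ (q:ℝ) < γ} := by
        intro x hx
        obtain ⟨q, hq1, hq2⟩ := exists_rat_btwn (show h x < γ from hx)
        exact mem_iUnion.2 ⟨q, hq1, hq2⟩
      refine measure_mono_null hsub (measure_iUnion_null fun q => ?_)
      by_cases hq : (q:ℝ) < γ
      · obtain ⟨t, htL, hqt⟩ := exists_lt_of_lt_csSup ⟨0, hL0⟩ hq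
        refine measure_mono_null (fun x hx => ?_) htL
        exact lt_trans hx.1 hqt
      · have hemp : {x | h x < q ∧ (q:ℝ) < γ} = ∅ := by
          ext x; simp only [mem_setOf_eq, mem_empty_iff_false, iff_false]
          exact fun hc => hq hc.2
        simp [hemp]
    filter_upwards [measure_eq_zero_iff_ae_notMem.mp hnull] with x hx
    simpa using not_lt.1 hx
  -- a.e. h < γ + δ for each δ > 0
  have hae_lt : ∀ δ : ℝ, 0 < δ → ∀ᵐ x ∂μ, h x < γ + δ := by
    intro δ hδ
    set s : Set Ω := {x | h x < γ + δ} with hs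
    have hsm : MeasurableSet s := measurableSet_lt hmeas_h measurable_const
    have hsinv : T ⁻¹' s = s := by
      ext x; simp only [mem_preimage, hs, mem_setOf_eq, hinv x]
    rcases herg.ae_empty_or_univ hsm hsinv with hemp | huniv
    · exfalso
      have hμs : μ s = 0 := by
        have := measure_congr hemp; simpa using this
      have hmem : γ + δ ∈ Lset := hμs
      have := le_csSup hLbdd hmem
      linarith
    · have hcompl := ae_eq_univ.mp huniv
      filter_upwards [measure_eq_zero_iff_ae_notMem.mp hcompl] with x hx
      simpa [hs] using not_not.1 hx
  -- main estimate : ∫ f ≤ γ + 2δ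
  have hfi : Integrable f μ := by
    refine Integrable.mono' (integrable_const 1) hf.aestronglyMeasurable ?_
    exact Eventually.of_forall fun x => by
      rw [Real.norm_eq_abs, abs_of_nonneg (hf0 x)]; exact hf1 x
  have main : ∀ δ : ℝ, 0 < δ → (∫ y, f y ∂μ) ≤ γ + 2 * δ := by
    intro δ hδ
    set E : ℕ → Set Ω := fun N => {x | ∀ n, 1 ≤ n → n ≤ N → γ + δ < A n x} with hE
    have hEmeas : ∀ N, MeasurableSet (E N) := by
      intro N
      have hrw : E N = ⋂ (n : ℕ) (_ : 1 ≤ n) (_ : n ≤ N), {x | γ + δ < A n x} := by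
        ext x; simp [hE, mem_iInter]
      rw [hrw]
      exact MeasurableSet.iInter fun n => MeasurableSet.iInter fun _ =>
        MeasurableSet.iInter fun _ => measurableSet_lt measurable_const (hAmeas n)
    have hEanti : Antitone E := by
      intro N M hNM x hx n h1n hnN
      exact hx n h1n (hnN.trans hNM)
    have hEinter : μ (⋂ N, E N) = 0 := by
      have hsub : (⋂ N, E N) ⊆ {x | ¬ h x < γ + δ} := by
        intro x hx
        simp only [mem_setOf_eq, not_lt]
        refine le_liminf_of_le (isCoboundedUnder_ge_of_le atTop fun n => hA1 n x) ?_
        filter_upwards [eventually_ge_atTop 1] with n hn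
        exact (mem_iInter.1 hx n n hn le_rfl).le
      refine measure_mono_null hsub ?_
      have := hae_lt δ hδ
      simpa [ae_iff] using this
    have htend : Tendsto (fun N => μ (E N)) atTop (nhds 0) := by
      have := tendsto_measure_iInter_atTop (μ := μ) (fun N => (hEmeas N).nullMeasurableSet)
        hEanti ⟨0, measure_ne_top μ _⟩
      rwa [hEinter] at this
    have hev : ∀ᶠ N in atTop, μ (E N) < ENNReal.ofReal δ :=
      htend.eventually_lt_const (by simp [hδ])
    obtain ⟨N, hN⟩ := hev.exists
    classical
    set g : Ω → ℝ := fun x => if x ∈ E N then 0 else f x with hg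
    have hgmeas : Measurable g := Measurable.ite (hEmeas N) measurable_const hf
    have hg0 : ∀ x, 0 ≤ g x := by
      intro x; simp only [hg]; split_ifs
      · exact le_refl 0
      · exact hf0 x
    have hgf : ∀ x, g x ≤ f x := by
      intro x; simp only [hg]; split_ifs
      · exact hf0 x
      · exact le_refl _
    have hg1 : ∀ x, g x ≤ 1 := fun x => (hgf x).trans (hf1 x)
    have hgi : Integrable g μ := by
      refine Integrable.mono' (integrable_const 1) hgmeas.aestronglyMeasurable ?_
      exact Eventually.of_forall fun x => by
        rw [Real.norm_eq_abs, abs_of_nonneg (hg0 x)]; exact hg1 x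
    have hγδ : 0 ≤ γ + δ := by linarith
    have key : ∀ L : ℕ, ∀ x : Ω, (∑ i ∈ Finset.range L, g (T^[i] x)) ≤ (γ + δ) * L + N := by
      intro L
      induction L using Nat.strong_induction_on with
      | _ L IH =>
        intro x
        rcases Nat.eq_zero_or_pos L with rfl | hL
        · simp only [Finset.range_zero, Finset.sum_empty, Nat.cast_zero, mul_zero, zero_add]
          positivity
        have step : ∀ n : ℕ, 1 ≤ n → n ≤ L →
            (∑ i ∈ Finset.range n, g (T^[i] x)) ≤ (γ + δ) * n →
            (∑ i ∈ Finset.range L, g (T^[i] x)) ≤ (γ + δ) * L + N := by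
          intro n h1n hnL hblock
          have hLdec : (∑ i ∈ Finset.range L, g (T^[i] x))
              = (∑ i ∈ Finset.range n, g (T^[i] x))
                + ∑ i ∈ Finset.range (L - n), g (T^[n + i] x) := by
            rw [← Finset.sum_range_add, Nat.add_sub_cancel' hnL]
          have hshift : ∀ i : ℕ, g (T^[n + i] x) = g (T^[i] (T^[n] x)) := by
            intro i
            rw [add_comm, Function.iterate_add_apply]
          rw [hLdec]
          simp_rw [hshift]
          have hIH := IH (L - n) (by omega) (T^[n] x)
          have hcast : ((L - n : ℕ) : ℝ) = (L : ℝ) - (n : ℝ) := by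
            rw [Nat.cast_sub hnL]
          rw [hcast] at hIH
          calc (∑ i ∈ Finset.range n, g (T^[i] x)) + ∑ i ∈ Finset.range (L - n), g (T^[i] (T^[n] x))
              ≤ (γ + δ) * n + ((γ + δ) * ((L:ℝ) - n) + N) := add_le_add hblock hIH
            _ = (γ + δ) * L + N := by ring
        by_cases hx : x ∈ E N
        · refine step 1 le_rfl hL ?_
          simp only [Finset.range_one, Finset.sum_singleton, Function.iterate_zero_apply]
          have : g x = 0 := by simp only [hg, if_pos hx]
          rw [this]
          simpa using hγδ
        · simp only [hE, mem_setOf_eq, not_forall, not_lt] at hx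
          obtain ⟨n, h1n, hnN, hAn⟩ := hx
          by_cases hnL : n ≤ L
          · refine step n h1n hnL ?_
            have hn0 : (0:ℝ) < n := by exact_mod_cast h1n
            have hSn : S n x ≤ (γ + δ) * n := by
              have hAn' : (n:ℝ)⁻¹ * S n x ≤ γ + δ := hAn
              calc S n x = (n:ℝ) * ((n:ℝ)⁻¹ * S n x) := by field_simp
                _ ≤ (n:ℝ) * (γ + δ) := mul_le_mul_of_nonneg_left hAn' hn0.le
                _ = (γ + δ) * n := mul_comm _ _
            calc (∑ i ∈ Finset.range n, g (T^[i] x)) ≤ ∑ i ∈ Finset.range n, f (T^[i] x) :=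
                  Finset.sum_le_sum fun i _ => hgf _
              _ ≤ (γ + δ) * n := hSn
          · push_neg at hnL
            have hLN : L ≤ N := by omega
            calc (∑ i ∈ Finset.range L, g (T^[i] x)) ≤ ∑ i ∈ Finset.range L, (1:ℝ) :=
                  Finset.sum_le_sum fun i _ => hg1 _
              _ = L := by simp
              _ ≤ (N:ℝ) := by exact_mod_cast hLN
              _ ≤ (γ + δ) * L + N := by nlinarith [hγδ, Nat.cast_nonneg (α := ℝ) L]
    have hint_comp : ∀ i : ℕ, ∫ x, g (T^[i] x) ∂μ = ∫ x, g x ∂μ := by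
      intro i
      have hmp : MeasurePreserving T^[i] μ μ := hT.iterate i
      conv_rhs => rw [← hmp.map_eq]
      rw [integral_map hmp.measurable.aemeasurable]
      rw [hmp.map_eq]
      exact hgmeas.aestronglyMeasurable
    have hLint : ∀ L : ℕ, (L : ℝ) * ∫ x, g x ∂μ ≤ (γ + δ) * L + N := by
      intro L
      have hint_each : ∀ i : ℕ, Integrable (fun x => g (T^[i] x)) μ := by
        intro i
        refine Integrable.mono' (integrable_const 1)
          (hgmeas.comp (hT.measurable.iterate i)).aestronglyMeasurable ?_
        exact Eventually.of_forall fun x => by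
          rw [Real.norm_eq_abs, abs_of_nonneg (hg0 _)]; exact hg1 _
      have hsum_int : ∫ x, (∑ i ∈ Finset.range L, g (T^[i] x)) ∂μ
          = ∑ i ∈ Finset.range L, ∫ x, g (T^[i] x) ∂μ :=
        integral_finset_sum _ fun i _ => hint_each i
      have hb : ∫ x, (∑ i ∈ Finset.range L, g (T^[i] x)) ∂μ ≤ (γ + δ) * L + N := by
        have hb' : ∫ x, (∑ i ∈ Finset.range L, g (T^[i] x)) ∂μ
            ≤ ∫ _, ((γ + δ) * L + N : ℝ) ∂μ := by
          refine integral_mono (integrable_finset_sum _ fun i _ => hint_each i)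
            (integrable_const _) ?_
          exact fun x => key L x
        rwa [integral_const, probReal_univ, one_smul] at hb'
      rw [hsum_int] at hb
      simp_rw [hint_comp] at hb
      rwa [Finset.sum_const, Finset.card_range, nsmul_eq_mul] at hb
    have hgle : ∫ x, g x ∂μ ≤ γ + δ := by
      refine le_of_forall_pos_le_add fun η hη => ?_
      obtain ⟨L, hL⟩ := exists_nat_gt ((N : ℝ) / η)
      have hL1 : (0:ℝ) < L := lt_of_le_of_lt (by positivity) hL
      have hLi := hLint L
      have hNL : (N : ℝ) ≤ η * L := by
        rw [div_lt_iff₀ hη] at hL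
        linarith [hL]
      have hmul : (L : ℝ) * ∫ x, g x ∂μ ≤ (γ + δ + η) * L := by
        calc (L : ℝ) * ∫ x, g x ∂μ ≤ (γ + δ) * L + N := hLi
          _ ≤ (γ + δ) * L + η * L := by linarith
          _ = (γ + δ + η) * L := by ring
      have hmul' : (∫ x, g x ∂μ) * L ≤ (γ + δ + η) * L := by
        rw [mul_comm]; exact hmul
      have hfin := le_of_mul_le_mul_right hmul' hL1
      linarith
    have hfg : ∫ x, f x ∂μ ≤ (∫ x, g x ∂μ) + δ := by
      have hdiff : ∫ x, (f x - g x) ∂μ ≤ δ := by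
        have hle : ∀ x, f x - g x ≤ (E N).indicator (fun _ => (1:ℝ)) x := by
          intro x
          simp only [hg]
          by_cases hx : x ∈ E N
          · simp [hx, indicator_of_mem, hf1 x]
          · simp [hx]
        calc ∫ x, (f x - g x) ∂μ ≤ ∫ x, (E N).indicator (fun _ => (1:ℝ)) x ∂μ := by
              refine integral_mono (hfi.sub hgi) ?_ hle
              exact (integrable_const 1).indicator (hEmeas N)
          _ = (μ (E N)).toReal • (1:ℝ) := integral_indicator_const _ (hEmeas N)
          _ ≤ δ := by
              rw [smul_eq_mul, mul_one]
              exact ENNReal.toReal_le_of_le_ofReal hδ.le hN.le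
      rw [integral_sub hfi hgi] at hdiff
      linarith
    linarith
  have hfγ : (∫ y, f y ∂μ) ≤ γ := by
    refine le_of_forall_pos_le_add fun ε hε => ?_
    have := main (ε / 2) (by linarith)
    linarith
  filter_upwards [hae_ge] with x hx
  exact hfγ.trans hx

/-- Gibbs' inequality on a set: `∫_s log(dW/dν) dW ≥ W(s) log (W(s)/ν(s))`. -/
theorem setIntegral_llr_ge {X : Type*} [MeasurableSpace X] (W ν : Measure X)
    [IsProbabilityMeasure W] [IsProbabilityMeasure ν] (hac : W ≪ ν)
    (hint : Integrable (llr W ν) W) {s : Set X} (hs : MeasurableSet s) :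
    (W s).toReal * Real.log ((W s).toReal / (ν s).toReal) ≤ ∫ x in s, llr W ν x ∂W := by
  by_cases hW0 : W s = 0
  · rw [hW0]
    simp [Measure.restrict_eq_zero.mpr hW0]
  have hν0 : ν s ≠ 0 := fun h0 => hW0 (hac h0)
  set a := (W s).toReal with hadef
  set b := (ν s).toReal with hbdef
  have ha : 0 < a := ENNReal.toReal_pos hW0 (measure_ne_top _ _)
  have hb : 0 < b := ENNReal.toReal_pos hν0 (measure_ne_top _ _)
  set c := a / b with hc
  have hcpos : 0 < c := div_pos ha hb
  set g : X → ℝ := fun x => (ν.rnDeriv W x).toReal with hg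
  have hgpos : ∀ᵐ x ∂W, 0 < g x := by
    filter_upwards [Measure.inv_rnDeriv hac, hac.ae_le (Measure.rnDeriv_lt_top W ν),
      Measure.rnDeriv_pos hac] with x hinv hlt hpos
    simp only [hg]
    rw [← hinv, Pi.inv_apply]
    refine ENNReal.toReal_pos ?_ ?_
    · simpa using hlt.ne
    · simpa using hpos.ne'
  have hpt : ∀ᵐ x ∂W, Real.log c + (1 - c * g x) ≤ llr W ν x := by
    filter_upwards [neg_llr hac, hgpos] with x hneg hgx
    have hllr : llr W ν x = - Real.log (g x) := by
      have h1 : - llr W ν x = llr ν W x := hneg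
      have h2 : llr ν W x = Real.log (g x) := rfl
      linarith [h1, h2]
    have hlog : Real.log (c * g x) ≤ c * g x - 1 :=
      Real.log_le_sub_one_of_pos (mul_pos hcpos hgx)
    rw [Real.log_mul hcpos.ne' hgx.ne'] at hlog
    rw [hllr]
    linarith
  have hgint : IntegrableOn g s W := by
    refine integrable_toReal_of_lintegral_ne_top
      (Measure.measurable_rnDeriv ν W).aemeasurable ?_
    exact ((Measure.setLIntegral_rnDeriv_le s).trans_lt (measure_lt_top ν s)).ne
  have hgintle : ∫ x in s, g x ∂W ≤ b := by
    have hfin : ∀ᵐ x ∂(W.restrict s), ν.rnDeriv W x < ⊤ :=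
      ae_restrict_of_ae (Measure.rnDeriv_lt_top ν W)
    rw [hg]
    rw [integral_toReal (Measure.measurable_rnDeriv ν W).aemeasurable hfin]
    exact ENNReal.toReal_mono (measure_ne_top ν s) (Measure.setLIntegral_rnDeriv_le s)
  have hsplit : ∫ x in s, llr W ν x ∂W
      = a * Real.log c + ∫ x in s, (llr W ν x - Real.log c) ∂W := by
    rw [integral_sub hint.restrict (integrable_const _), integral_const]
    simp only [MeasureTheory.Measure.restrict_apply_univ, measureReal_restrict_apply_univ, measureReal_def, smul_eq_mul, ← hadef]
    ring
  have hmono : ∫ x in s, (1 - c * g x) ∂W ≤ ∫ x in s, (llr W ν x - Real.log c) ∂W := by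
    refine integral_mono_ae ((integrable_const 1).sub (hgint.const_mul c))
      (hint.restrict.sub (integrable_const _)) ?_
    exact ae_restrict_of_ae (hpt.mono fun x hx => by dsimp only; linarith)
  have hval : ∫ x in s, (1 - c * g x) ∂W = a - c * ∫ x in s, g x ∂W := by
    rw [integral_sub (integrable_const _) (hgint.const_mul c), integral_const,
      integral_const_mul]
    simp only [MeasureTheory.Measure.restrict_apply_univ, measureReal_restrict_apply_univ, measureReal_def, smul_eq_mul, ← hadef]
    ring
  have hnn : 0 ≤ ∫ x in s, (1 - c * g x) ∂W := by
    rw [hval]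
    have h1 : c * ∫ x in s, g x ∂W ≤ c * b := mul_le_mul_of_nonneg_left hgintle hcpos.le
    have h2 : c * b = a := by
      rw [hc]; field_simp
    linarith
  calc a * Real.log (a / b) = a * Real.log c := by rw [hc]
    _ ≤ a * Real.log c + ∫ x in s, (llr W ν x - Real.log c) ∂W := by linarith [hnn.trans hmono]
    _ = ∫ x in s, llr W ν x ∂W := hsplit.symm

private lemma entropy_core (w u p : ℝ) (hw : 0 ≤ w) (hu : 0 ≤ u) (hwu : w + u = p)
    (hp : 0 < p) :
    -(p * Real.log 2) ≤ w * Real.log (w / p) + u * Real.log (u / p) := by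
  have hb := Real.binEntropy_le_log_two (p := w / p)
  rw [Real.binEntropy, Real.log_inv, Real.log_inv] at hb
  have h1m : 1 - w / p = u / p := by field_simp; linarith
  rw [h1m] at hb
  have hmul := mul_le_mul_of_nonneg_left hb hp.le
  have e1 : p * (w / p * -Real.log (w / p) + u / p * -Real.log (u / p))
      = -(w * Real.log (w / p)) - u * Real.log (u / p) := by
    field_simp
    ring
  rw [e1] at hmul
  have e2 : p * Real.log 2 = p * Real.log 2 := rfl
  nlinarith [hmul]

private lemma real_core (w u p c ε ν1 ν2 : ℝ)
    (hw : 0 ≤ w) (hu : 0 ≤ u) (hwu : w + u = p) (huc : u ≤ c) (hc : 0 ≤ c)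
    (hε0 : 0 < ε) (hε1 : ε < 1)
    (hν1 : ν1 ≤ p * ε) (hν2 : ν2 ≤ p)
    (hν10 : ν1 = 0 → w = 0) (hν20 : ν2 = 0 → u = 0)
    (hν1nn : 0 ≤ ν1) (hν2nn : 0 ≤ ν2) :
    (p - c) * Real.log ε⁻¹ - p * Real.log 2
      ≤ w * Real.log (w / ν1) + u * Real.log (u / ν2) := by
  have hp : 0 ≤ p := by linarith
  have hL : 0 ≤ Real.log ε⁻¹ := by
    rw [Real.log_inv]
    linarith [Real.log_neg hε0 hε1]
  rcases eq_or_lt_of_le hp with hp0 | hppos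
  · have hw0 : w = 0 := by linarith
    have hu0 : u = 0 := by linarith
    rw [hw0, hu0, ← hp0]
    simp only [zero_mul, add_zero, zero_sub, neg_mul, zero_add, zero_mul, sub_zero]
    have h1 : 0 ≤ c * Real.log ε⁻¹ := mul_nonneg hc hL
    nlinarith [h1]
  have step1 : w * Real.log (w / (p * ε)) ≤ w * Real.log (w / ν1) := by
    rcases eq_or_lt_of_le hw with hw0 | hwpos
    · rw [← hw0]; simp
    · have hν1pos : 0 < ν1 := by
        rcases eq_or_lt_of_le hν1nn with h | h
        · exact absurd (hν10 h.symm) (by linarith)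
        · exact h
      have hpε : 0 < p * ε := mul_pos hppos hε0
      refine mul_le_mul_of_nonneg_left ?_ hw
      exact Real.log_le_log (by positivity) (div_le_div_of_nonneg_left hw hν1pos hν1)
  have step2 : u * Real.log (u / p) ≤ u * Real.log (u / ν2) := by
    rcases eq_or_lt_of_le hu with hu0 | hupos
    · rw [← hu0]; simp
    · have hν2pos : 0 < ν2 := by
        rcases eq_or_lt_of_le hν2nn with h | h
        · exact absurd (hν20 h.symm) (by linarith)
        · exact h
      refine mul_le_mul_of_nonneg_left ?_ hu
      exact Real.log_le_log (by positivity) (div_le_div_of_nonneg_left hu hν2pos hν2)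
  have step3 : w * Real.log (w / (p * ε)) = w * Real.log (w / p) + w * Real.log ε⁻¹ := by
    rcases eq_or_lt_of_le hw with hw0 | hwpos
    · rw [← hw0]; simp
    · have h1 : w / (p * ε) = (w / p) * ε⁻¹ := by field_simp
      rw [h1, Real.log_mul (by positivity) (by positivity)]
      ring
  have step4 : -(p * Real.log 2) ≤ w * Real.log (w / p) + u * Real.log (u / p) :=
    entropy_core w u p hw hu hwu hppos
  have step5 : (p - c) * Real.log ε⁻¹ ≤ w * Real.log ε⁻¹ :=
    mul_le_mul_of_nonneg_right (by linarith) hL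
  linarith [step1, step2, step3, step4, step5]

lemma empMeas_apply {A : Type*} [MeasurableSpace A] (x : ℕ → A) (n : ℕ) {K : Set A}
    (hK : MeasurableSet K) :
    empMeas x n K = (n : ℝ≥0∞)⁻¹ * ∑ k ∈ Finset.range n,
      K.indicator (fun _ => (1:ℝ≥0∞)) (x k) := by
  rw [empMeas, Measure.smul_apply, smul_eq_mul, Measure.finset_sum_apply]
  congr 1
  refine Finset.sum_congr rfl fun k _ => ?_
  rw [Measure.dirac_apply' _ hK]
  rfl

lemma empMeas_prob {A : Type*} [MeasurableSpace A] (x : ℕ → A) {n : ℕ} (hn : 1 ≤ n) :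
    IsProbabilityMeasure (empMeas x n) := by
  constructor
  rw [empMeas_apply x n MeasurableSet.univ]
  have : ∀ k ∈ Finset.range n, (univ : Set A).indicator (fun _ => (1:ℝ≥0∞)) (x k) = 1 := by
    intro k _; simp
  rw [Finset.sum_congr rfl this, Finset.sum_const, Finset.card_range, nsmul_eq_mul, mul_one]
  exact ENNReal.inv_mul_cancel (by exact_mod_cast Nat.one_le_iff_ne_zero.1 hn)
    (ENNReal.natCast_ne_top n)

lemma empMeas_toReal {A : Type*} [MeasurableSpace A] (x : ℕ → A) (n : ℕ) {K : Set A}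
    (hK : MeasurableSet K) :
    (empMeas x n K).toReal = (n : ℝ)⁻¹ * ∑ k ∈ Finset.range n,
      K.indicator (fun _ => (1:ℝ)) (x k) := by
  rw [empMeas_apply x n hK, ENNReal.toReal_mul, ENNReal.toReal_inv, ENNReal.toReal_natCast,
    ENNReal.toReal_sum (fun k _ => by
      by_cases hx : x k ∈ K <;> simp [hx])]
  congr 1
  refine Finset.sum_congr rfl fun k _ => ?_
  by_cases hx : x k ∈ K <;> simp [hx]

lemma shift_iterate_apply {A : Type*} : ∀ (k : ℕ) (ω : ℕ → A), shift^[k] ω 0 = ω k := by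
  intro k
  induction k with
  | zero => intro ω; rfl
  | succ k ih =>
    intro ω
    rw [Function.iterate_succ_apply, ih (shift ω)]
    rfl

/-- The per-measure lower bound on `RQ` when `Q'` gives small mass to the distortion ball. -/
theorem RQ_lower {A B : Type*} [MeasurableSpace A] [MeasurableSpace B]
    (ρ : A → B → ℝ) (hρmeas : Measurable (Function.uncurry ρ)) (hρnn : ∀ x y, 0 ≤ ρ x y)
    (P' : Measure A) (Q' : Measure B) [IsProbabilityMeasure Q']
    (D : ℝ) (hD : 0 ≤ D) (Δ : ℝ) (hΔ : 0 < Δ) (K : Set A) (hK : MeasurableSet K)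
    (ε : ℝ) (hε0 : 0 < ε) (hε1 : ε < 1)
    (hQB : Q' (Bset ρ K (D + Δ)) < ENNReal.ofReal ε) :
    ENNReal.ofReal (((P' K).toReal - D / (D + Δ)) * Real.log ε⁻¹
        - (P' K).toReal * Real.log 2)
      ≤ RQ ρ P' Q' D := by
  rw [RQ]
  refine le_iInf₂ fun W hW => ?_
  obtain ⟨hWprob, hWfst, hWdist⟩ := hW
  haveI := hWprob
  haveI : IsProbabilityMeasure P' := by
    rw [← hWfst]; infer_instance
  set ν : Measure (A × B) := P'.prod Q' with hν
  haveI : IsProbabilityMeasure ν := by rw [hν]; infer_instance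
  rw [relEnt]
  split_ifs with hcond
  · -- the absolutely continuous, integrable case
    obtain ⟨hac, hint⟩ := hcond
    refine ENNReal.ofReal_le_ofReal ?_
    -- sets
    set K1 : Set (A × B) := Prod.fst ⁻¹' K with hK1
    have hK1m : MeasurableSet K1 := hK.preimage measurable_fst
    set S1 : Set (A × B) := K1 ∩ {q : A × B | ρ q.1 q.2 ≤ D + Δ} with hS1
    have hS1m : MeasurableSet S1 :=
      hK1m.inter (hρmeas measurableSet_Iic)
    have hS1sub : S1 ⊆ K1 := inter_subset_left
    set S2 : Set (A × B) := K1 \ S1 with hS2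
    have hS2m : MeasurableSet S2 := hK1m.diff hS1m
    -- measure identities
    have hWK1 : W K1 = P' K := by
      rw [hK1, ← Measure.fst_apply hK, hWfst]
    have hνK1 : ν K1 = P' K := by
      rw [hK1, ← Measure.fst_apply hK, hν, Measure.fst_prod]
    have hWsum : W S1 + W S2 = P' K := by
      rw [hS2, ← hWK1, ← measure_inter_add_diff K1 hS1m,
        inter_eq_self_of_subset_right hS1sub]
    -- real values
    set w := (W S1).toReal with hwdef
    set u := (W S2).toReal with hudef
    set p := (P' K).toReal with hpdef
    have hwu : w + u = p := by
      rw [hwdef, hudef, hpdef, ← ENNReal.toReal_add (measure_ne_top _ _) (measure_ne_top _ _),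
        hWsum]
    -- Markov bound : u ≤ D/(D+Δ)
    have hDΔ : (0:ℝ) < D + Δ := by linarith
    have hmark : ENNReal.ofReal (D + Δ) * W S2 ≤ ENNReal.ofReal D := by
      calc ENNReal.ofReal (D + Δ) * W S2 = ∫⁻ _ in S2, ENNReal.ofReal (D + Δ) ∂W := by
            rw [setLIntegral_const]
        _ ≤ ∫⁻ q in S2, ENNReal.ofReal (ρ q.1 q.2) ∂W := by
            refine setLIntegral_mono (hρmeas.ennreal_ofReal) fun q hq => ?_
            refine ENNReal.ofReal_le_ofReal ?_
            have := hq.2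
            simp only [hS1, mem_inter_iff, mem_setOf_eq, not_and, not_le] at this
            exact (this (hq.1)).le
        _ ≤ ∫⁻ q, ENNReal.ofReal (ρ q.1 q.2) ∂W := setLIntegral_le_lintegral _ _
        _ ≤ ENNReal.ofReal D := hWdist
    have huc : u ≤ D / (D + Δ) := by
      have h2 : W S2 ≤ ENNReal.ofReal D / ENNReal.ofReal (D + Δ) := by
        rw [ENNReal.le_div_iff_mul_le (Or.inl (by simp [hDΔ])) (Or.inl ENNReal.ofReal_ne_top)]
        rw [mul_comm]
        exact hmark
      rw [← ENNReal.ofReal_div_of_pos hDΔ] at h2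
      calc u ≤ (ENNReal.ofReal (D / (D + Δ))).toReal :=
            ENNReal.toReal_mono ENNReal.ofReal_ne_top h2
        _ = D / (D + Δ) := ENNReal.toReal_ofReal (by positivity)
    -- bound on ν S1
    have hνS1 : ν S1 ≤ P' K * ENNReal.ofReal ε := by
      rw [hν, Measure.prod_apply hS1m]
      have hsl : ∀ x, Q' (Prod.mk x ⁻¹' S1) ≤ K.indicator (fun _ => ENNReal.ofReal ε) x := by
        intro x
        by_cases hx : x ∈ K
        · rw [indicator_of_mem hx]
          refine le_trans (measure_mono ?_) hQB.le
          intro y hy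
          simp only [hS1, hK1, mem_preimage, mem_inter_iff, mem_setOf_eq] at hy
          exact ⟨x, hx, hy.2⟩
        · rw [indicator_of_notMem hx]
          have hempty : Prod.mk x ⁻¹' S1 = ∅ := by
            ext y
            simp only [hS1, hK1, mem_preimage, mem_inter_iff, mem_setOf_eq,
              mem_empty_iff_false, iff_false]
            exact fun hc => hx hc.1
          simp [hempty]
      calc ∫⁻ x, Q' (Prod.mk x ⁻¹' S1) ∂P'
          ≤ ∫⁻ x, K.indicator (fun _ => ENNReal.ofReal ε) x ∂P' := lintegral_mono hsl
        _ = ENNReal.ofReal ε * P' K := by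
            rw [lintegral_indicator hK]
            simp [setLIntegral_const]
        _ = P' K * ENNReal.ofReal ε := mul_comm _ _
    have hνS2 : ν S2 ≤ P' K := by
      rw [← hνK1]
      exact measure_mono diff_subset
    -- the complement piece
    set S3 : Set (A × B) := K1ᶜ with hS3
    have hS3m : MeasurableSet S3 := hK1m.compl
    have hWS3 : W S3 = P' Kᶜ := by
      rw [hS3, hK1, ← preimage_compl, ← Measure.fst_apply hK.compl, hWfst]
    have hνS3 : ν S3 = P' Kᶜ := by
      rw [hS3, hK1, ← preimage_compl, ← Measure.fst_apply hK.compl, hν, Measure.fst_prod]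
    -- split the integral
    have hsplit : ∫ q, llr W ν q ∂W
        = (∫ q in S1, llr W ν q ∂W) + (∫ q in S2, llr W ν q ∂W)
          + ∫ q in S3, llr W ν q ∂W := by
      rw [hS3, ← integral_add_compl hK1m hint]
      congr 1
      rw [← integral_inter_add_diff hS1m hint.integrableOn,
        inter_eq_self_of_subset_right hS1sub]
    -- apply Gibbs' inequality on each piece
    have hb1 := setIntegral_llr_ge W ν hac hint hS1m
    have hb2 := setIntegral_llr_ge W ν hac hint hS2m
    have hb3 := setIntegral_llr_ge W ν hac hint hS3m
    have hb3' : (0:ℝ) ≤ ∫ q in S3, llr W ν q ∂W := by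
      refine le_trans (le_of_eq ?_) hb3
      rw [hWS3, hνS3]
      rcases eq_or_ne ((P' Kᶜ).toReal) 0 with h | h
      · rw [h]; ring
      · rw [div_self h, Real.log_one, mul_zero]
    -- collect the real bounds
    have hν1le : (ν S1).toReal ≤ p * ε := by
      calc (ν S1).toReal ≤ (P' K * ENNReal.ofReal ε).toReal :=
            ENNReal.toReal_mono (by finiteness) hνS1
        _ = p * ε := by
            rw [ENNReal.toReal_mul, ENNReal.toReal_ofReal hε0.le]
    have hν2le : (ν S2).toReal ≤ p :=
      ENNReal.toReal_mono (measure_ne_top _ _) hνS2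
    have hν10 : (ν S1).toReal = 0 → w = 0 := by
      intro h
      have : ν S1 = 0 := by
        rcases (ENNReal.toReal_eq_zero_iff _).1 h with h' | h'
        · exact h'
        · exact absurd h' (measure_ne_top _ _)
      have : W S1 = 0 := hac this
      rw [hwdef, this, ENNReal.toReal_zero]
    have hν20 : (ν S2).toReal = 0 → u = 0 := by
      intro h
      have : ν S2 = 0 := by
        rcases (ENNReal.toReal_eq_zero_iff _).1 h with h' | h'
        · exact h'
        · exact absurd h' (measure_ne_top _ _)
      have : W S2 = 0 := hac this
      rw [hudef, this, ENNReal.toReal_zero]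
    have hcore := real_core w u p (D / (D + Δ)) ε (ν S1).toReal (ν S2).toReal
      ENNReal.toReal_nonneg ENNReal.toReal_nonneg hwu huc (by positivity) hε0 hε1
      hν1le hν2le hν10 hν20 ENNReal.toReal_nonneg ENNReal.toReal_nonneg
    calc (p - D / (D + Δ)) * Real.log ε⁻¹ - p * Real.log 2
        ≤ w * Real.log (w / (ν S1).toReal) + u * Real.log (u / (ν S2).toReal) := hcore
      _ ≤ (∫ q in S1, llr W ν q ∂W) + ∫ q in S2, llr W ν q ∂W := add_le_add hb1 hb2
      _ ≤ (∫ q in S1, llr W ν q ∂W) + (∫ q in S2, llr W ν q ∂W)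
          + ∫ q in S3, llr W ν q ∂W := by linarith [hb3']
      _ = ∫ q, llr W ν q ∂W := hsplit.symm
  · exact le_top

end AuxiliaryLemmas

/-- The key estimate in the proof that P2 implies A2: with
`T_ε = {θ : Q_θ(B(K,D+Δ)) ≥ ε}` one has, for each `ε ∈ (0,1)`, a.s.
`liminf_n inf_{θ ∈ T_εᶜ} R₁(P_{X₁ⁿ},Q_θ,D) ≥ (D/(D+Δ)) log ε − P(K) log(2ε)`, and
consequently a.s. `lim_{ε↓0} liminf_n inf_{θ ∈ T_εᶜ} R₁(P_{X₁ⁿ},Q_θ,D) = ∞`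
(the monotone limit in `ε` being the supremum over `ε ∈ (0,1)`). -/
theorem Teps_complement_blows_up
    {A B Θ : Type*} [MeasurableSpace A] [MeasurableSpace B]
    [StandardBorelSpace A] [StandardBorelSpace B]
    (ρ : A → B → ℝ) (hρmeas : Measurable (Function.uncurry ρ))
    (hρnn : ∀ x y, 0 ≤ ρ x y)
    (Q : Θ → Measure B) (hQ : ∀ θ, IsProbabilityMeasure (Q θ))
    (μ : Measure (ℕ → A)) [IsProbabilityMeasure μ]
    (herg : Ergodic shift μ)
    (P : Measure A) (hP : P = μ.map (fun ω => ω 0))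
    (D : ℝ) (hD : 0 ≤ D) (Δ : ℝ) (hΔ : 0 < Δ)
    (K : Set A) (hK : MeasurableSet K)
    (hPK : ENNReal.ofReal (D / (D + Δ)) < P K) :
    (∀ ε ∈ Set.Ioo (0:ℝ) 1, ∀ᵐ ω ∂μ,
      ENNReal.ofReal (D / (D + Δ) * Real.log ε - (P K).toReal * Real.log (2 * ε))
        ≤ liminf
          (fun n => ⨅ (θ : Θ) (_ : ¬ ENNReal.ofReal ε ≤ Q θ (Bset ρ K (D + Δ))),
            RQ ρ (empMeas ω n) (Q θ) D) atTop)
    ∧ (∀ᵐ ω ∂μ,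
      (⨆ (ε : ℝ) (_ : ε ∈ Set.Ioo (0:ℝ) 1),
        liminf
          (fun n => ⨅ (θ : Θ) (_ : ¬ ENNReal.ofReal ε ≤ Q θ (Bset ρ K (D + Δ))),
            RQ ρ (empMeas ω n) (Q θ) D) atTop) = ⊤) := by
  classical
  have hDΔ : (0:ℝ) < D + Δ := by linarith
  have hc0 : (0:ℝ) ≤ D / (D + Δ) := by positivity
  haveI hPprob : IsProbabilityMeasure P := by
    rw [hP]; exact Measure.isProbabilityMeasure_map (measurable_pi_apply 0).aemeasurable
  have hcK : D / (D + Δ) < (P K).toReal :=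
    (ENNReal.ofReal_lt_iff_lt_toReal hc0 (measure_ne_top _ _)).1 hPK
  have hpK1 : (P K).toReal ≤ 1 := by
    calc (P K).toReal ≤ (1:ℝ≥0∞).toReal :=
          ENNReal.toReal_mono ENNReal.one_ne_top prob_le_one
      _ = 1 := by simp
  set f : (ℕ → A) → ℝ := fun ω' => K.indicator (fun _ => (1:ℝ)) (ω' 0) with hfdef
  have hfmeas : Measurable f := (measurable_const.indicator hK).comp (measurable_pi_apply 0)
  have hf0 : ∀ y, 0 ≤ f y := by
    intro y; by_cases hy : y 0 ∈ K <;> simp [hfdef, hy]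
  have hf1 : ∀ y, f y ≤ 1 := by
    intro y; by_cases hy : y 0 ∈ K <;> simp [hfdef, hy]
  have hfk : ∀ (ω : ℕ → A) (k : ℕ), f (shift^[k] ω) = K.indicator (fun _ => (1:ℝ)) (ω k) := by
    intro ω k; simp only [hfdef]; rw [shift_iterate_apply k ω]
  have hintf : ∫ y, f y ∂μ = (P K).toReal := by
    have h1 : ∫ y, f y ∂μ = ∫ a, K.indicator (fun _ => (1:ℝ)) a ∂P := by
      rw [hP, integral_map (measurable_pi_apply 0).aemeasurable
        (measurable_const.indicator hK).aestronglyMeasurable]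
    rw [h1, integral_indicator_const (1:ℝ) hK, smul_eq_mul, mul_one, measureReal_def]
  have hω0 := ergodic_liminf_avg herg hfmeas hf0 hf1
  have hemp : ∀ (ω : ℕ → A) (n : ℕ),
      (empMeas ω n K).toReal = (n:ℝ)⁻¹ * ∑ k ∈ Finset.range n, f (shift^[k] ω) := by
    intro ω n
    rw [empMeas_toReal ω n hK]
    congr 1
    exact Finset.sum_congr rfl fun k _ => (hfk ω k).symm
  have havg0 : ∀ (ω : ℕ → A) (n : ℕ),
      0 ≤ (n:ℝ)⁻¹ * ∑ k ∈ Finset.range n, f (shift^[k] ω) := by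
    intro ω n
    exact mul_nonneg (by positivity) (Finset.sum_nonneg fun k _ => hf0 _)
  have havg1 : ∀ (ω : ℕ → A) (n : ℕ),
      (n:ℝ)⁻¹ * ∑ k ∈ Finset.range n, f (shift^[k] ω) ≤ 1 := by
    intro ω n
    rcases Nat.eq_zero_or_pos n with rfl | hn
    · simp
    · have hnn : (0:ℝ) < n := by exact_mod_cast hn
      have hsum : ∑ k ∈ Finset.range n, f (shift^[k] ω) ≤ (n:ℝ) := by
        calc ∑ k ∈ Finset.range n, f (shift^[k] ω) ≤ ∑ _ ∈ Finset.range n, (1:ℝ) :=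
              Finset.sum_le_sum fun k _ => hf1 _
          _ = (n:ℝ) := by simp
      calc (n:ℝ)⁻¹ * ∑ k ∈ Finset.range n, f (shift^[k] ω) ≤ (n:ℝ)⁻¹ * n :=
            mul_le_mul_of_nonneg_left hsum (by positivity)
        _ = 1 := inv_mul_cancel₀ hnn.ne'
  -- the per-ε statement
  have bullet1 : ∀ ε ∈ Set.Ioo (0:ℝ) 1, ∀ᵐ ω ∂μ,
      ENNReal.ofReal (D / (D + Δ) * Real.log ε - (P K).toReal * Real.log (2 * ε))
        ≤ liminf
          (fun n => ⨅ (θ : Θ) (_ : ¬ ENNReal.ofReal ε ≤ Q θ (Bset ρ K (D + Δ))),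
            RQ ρ (empMeas ω n) (Q θ) D) atTop := by
    rintro ε ⟨hε0, hε1⟩
    filter_upwards [hω0] with ω hω
    set F : ℕ → ℝ≥0∞ := fun n => ⨅ (θ : Θ) (_ : ¬ ENNReal.ofReal ε ≤ Q θ (Bset ρ K (D + Δ))),
      RQ ρ (empMeas ω n) (Q θ) D with hFdef
    have hL0 : 0 ≤ Real.log ε⁻¹ := by
      rw [Real.log_inv]; linarith [Real.log_neg hε0 hε1]
    have htar : D / (D + Δ) * Real.log ε - (P K).toReal * Real.log (2 * ε)
        = ((P K).toReal - D / (D + Δ)) * Real.log ε⁻¹ - (P K).toReal * Real.log 2 := by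
      rw [Real.log_mul two_ne_zero hε0.ne', Real.log_inv]
      ring
    rw [htar]
    rcases lt_or_ge (Real.log ε⁻¹) (Real.log 2) with hs | hs
    · have hnonpos : ((P K).toReal - D / (D + Δ)) * Real.log ε⁻¹
          - (P K).toReal * Real.log 2 ≤ 0 := by
        have h1 : ((P K).toReal - D / (D + Δ)) * Real.log ε⁻¹
            ≤ ((P K).toReal - D / (D + Δ)) * Real.log 2 :=
          mul_le_mul_of_nonneg_left hs.le (by linarith)
        have h2 : ((P K).toReal - D / (D + Δ)) * Real.log 2 ≤ (P K).toReal * Real.log 2 :=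
          mul_le_mul_of_nonneg_right (by linarith) (Real.log_nonneg one_le_two)
        linarith
      rw [ENNReal.ofReal_of_nonpos hnonpos]
      exact zero_le
    · have claim : ∀ δ : ℝ, 0 < δ →
          ENNReal.ofReal (((P K).toReal - D / (D + Δ)) * Real.log ε⁻¹
            - (P K).toReal * Real.log 2 - δ * (Real.log ε⁻¹ - Real.log 2))
            ≤ liminf F atTop := by
        intro δ hδ
        have hliminf : (P K).toReal - δ
            < liminf (fun n : ℕ => (n:ℝ)⁻¹ * ∑ k ∈ Finset.range n, f (shift^[k] ω)) atTop := by
          rw [hintf] at hω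
          linarith [hω]
        have hev1 := eventually_lt_of_lt_liminf hliminf
          (isBoundedUnder_of ⟨0, fun n => havg0 ω n⟩)
        have hev2 : ∀ᶠ n in atTop,
            ENNReal.ofReal (((P K).toReal - D / (D + Δ)) * Real.log ε⁻¹
              - (P K).toReal * Real.log 2 - δ * (Real.log ε⁻¹ - Real.log 2)) ≤ F n := by
          filter_upwards [hev1, eventually_ge_atTop 1] with n hn h1n
          have haseq : (P K).toReal - δ < (empMeas ω n K).toReal := by
            rw [hemp ω n]; exact hn
          have hφ : ((P K).toReal - D / (D + Δ)) * Real.log ε⁻¹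
              - (P K).toReal * Real.log 2 - δ * (Real.log ε⁻¹ - Real.log 2)
              ≤ ((empMeas ω n K).toReal - D / (D + Δ)) * Real.log ε⁻¹
                - (empMeas ω n K).toReal * Real.log 2 := by
            nlinarith [mul_nonneg
              (show (0:ℝ) ≤ (empMeas ω n K).toReal - (P K).toReal + δ by linarith)
              (show (0:ℝ) ≤ Real.log ε⁻¹ - Real.log 2 by linarith)]
          refine le_trans (ENNReal.ofReal_le_ofReal hφ) ?_
          refine le_iInf fun θ => le_iInf fun hθ => ?_
          haveI := hQ θ
          haveI : IsProbabilityMeasure (empMeas ω n) := empMeas_prob ω h1n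
          exact RQ_lower ρ hρmeas hρnn (empMeas ω n) (Q θ) D hD Δ hΔ K hK ε hε0 hε1
            (not_le.1 hθ)
        exact le_liminf_of_le (by isBoundedDefault) hev2
      refine ENNReal.le_of_forall_pos_le_add fun η hη hfin => ?_
      rcases eq_or_lt_of_le (show (0:ℝ) ≤ Real.log ε⁻¹ - Real.log 2 by linarith) with hs0 | hs0
      · have h1 := claim 1 one_pos
        rw [← hs0, mul_zero, sub_zero] at h1
        exact le_trans h1 le_self_add
      · set δ : ℝ := (η:ℝ) / (2 * (Real.log ε⁻¹ - Real.log 2)) with hδdef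
        have hηpos : (0:ℝ) < η := hη
        have hδpos : 0 < δ := by
          rw [hδdef]; positivity
        have h1 := claim δ hδpos
        have hne0 : Real.log ε⁻¹ - Real.log 2 ≠ 0 := ne_of_gt hs0
        have h2 : δ * (Real.log ε⁻¹ - Real.log 2) = (η:ℝ)/2 := by
          rw [hδdef, div_mul_eq_mul_div, mul_comm (2:ℝ) (Real.log ε⁻¹ - Real.log 2), ← div_div,
            mul_div_assoc, div_self hne0, mul_one]
        rw [h2] at h1
        calc ENNReal.ofReal (((P K).toReal - D / (D + Δ)) * Real.log ε⁻¹
              - (P K).toReal * Real.log 2)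
            ≤ ENNReal.ofReal (((P K).toReal - D / (D + Δ)) * Real.log ε⁻¹
                - (P K).toReal * Real.log 2 - (η:ℝ)/2) + ENNReal.ofReal ((η:ℝ)/2) := by
              refine le_trans (le_of_eq ?_) ENNReal.ofReal_add_le
              congr 1
              ring
          _ ≤ liminf F atTop + ENNReal.ofReal ((η:ℝ)/2) := add_le_add_left h1 _
          _ ≤ liminf F atTop + (η : ℝ≥0∞) := by
              refine add_le_add_right ?_ _
              calc ENNReal.ofReal ((η:ℝ)/2) ≤ ENNReal.ofReal (η:ℝ) :=
                    ENNReal.ofReal_le_ofReal (by linarith)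
                _ = (η : ℝ≥0∞) := ENNReal.ofReal_coe_nnreal
  refine ⟨bullet1, ?_⟩
  -- second statement
  have hmem : ∀ k : ℕ, Real.exp (-((k:ℝ)+1)) ∈ Set.Ioo (0:ℝ) 1 := by
    intro k
    refine ⟨Real.exp_pos _, Real.exp_lt_one_iff.2 ?_⟩
    have : (0:ℝ) ≤ (k:ℝ) := Nat.cast_nonneg k
    linarith
  have hcnt : ∀ᵐ ω ∂μ, ∀ k : ℕ,
      ENNReal.ofReal (D / (D + Δ) * Real.log (Real.exp (-((k:ℝ)+1)))
        - (P K).toReal * Real.log (2 * Real.exp (-((k:ℝ)+1))))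
        ≤ liminf
          (fun n => ⨅ (θ : Θ)
            (_ : ¬ ENNReal.ofReal (Real.exp (-((k:ℝ)+1))) ≤ Q θ (Bset ρ K (D + Δ))),
            RQ ρ (empMeas ω n) (Q θ) D) atTop :=
    ae_all_iff.2 fun k => bullet1 _ (hmem k)
  filter_upwards [hcnt] with ω hω
  by_contra hne
  have hsup : ∀ k : ℕ,
      ENNReal.ofReal (((P K).toReal - D / (D + Δ)) * ((k:ℝ)+1) - (P K).toReal * Real.log 2)
        ≤ (⨆ (ε : ℝ) (_ : ε ∈ Set.Ioo (0:ℝ) 1),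
            liminf (fun n => ⨅ (θ : Θ) (_ : ¬ ENNReal.ofReal ε ≤ Q θ (Bset ρ K (D + Δ))),
              RQ ρ (empMeas ω n) (Q θ) D) atTop) := by
    intro k
    have h1 := hω k
    have htar : D / (D + Δ) * Real.log (Real.exp (-((k:ℝ)+1)))
        - (P K).toReal * Real.log (2 * Real.exp (-((k:ℝ)+1)))
        = ((P K).toReal - D / (D + Δ)) * ((k:ℝ)+1) - (P K).toReal * Real.log 2 := by
      rw [Real.log_mul two_ne_zero (Real.exp_pos _).ne', Real.log_exp]
      ring
    rw [htar] at h1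
    refine le_trans h1 ?_
    exact le_iSup₂ (f := fun (ε : ℝ) (_ : ε ∈ Set.Ioo (0:ℝ) 1) =>
      liminf (fun n => ⨅ (θ : Θ) (_ : ¬ ENNReal.ofReal ε ≤ Q θ (Bset ρ K (D + Δ))),
        RQ ρ (empMeas ω n) (Q θ) D) atTop) _ (hmem k)
  have hreal : ∀ k : ℕ,
      ((P K).toReal - D / (D + Δ)) * ((k:ℝ)+1) - (P K).toReal * Real.log 2
        ≤ ((⨆ (ε : ℝ) (_ : ε ∈ Set.Ioo (0:ℝ) 1),
            liminf (fun n => ⨅ (θ : Θ) (_ : ¬ ENNReal.ofReal ε ≤ Q θ (Bset ρ K (D + Δ))),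
              RQ ρ (empMeas ω n) (Q θ) D) atTop)).toReal := by
    intro k
    exact (ENNReal.ofReal_le_iff_le_toReal hne).1 (hsup k)
  obtain ⟨m, hm⟩ := exists_nat_gt
    ((((⨆ (ε : ℝ) (_ : ε ∈ Set.Ioo (0:ℝ) 1),
        liminf (fun n => ⨅ (θ : Θ) (_ : ¬ ENNReal.ofReal ε ≤ Q θ (Bset ρ K (D + Δ))),
          RQ ρ (empMeas ω n) (Q θ) D) atTop)).toReal
      + (P K).toReal * Real.log 2) / ((P K).toReal - D / (D + Δ)))
  have hposc : (0:ℝ) < (P K).toReal - D / (D + Δ) := by linarith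
  rw [div_lt_iff₀ hposc] at hm
  have := hreal m
  nlinarith [this, hm, hposc]
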